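/- Let a group G act on a nonempty set X. A mean μ on ℓ∞(X) is G-invariant if and only if it is invariant under the wobbling group W(G,X) of the action. -/

import Mathlib

/-- The bounded real functions on `X` (the space `ℓ∞(X)`). -/
def Bdd (X : Type*) : Set (X → ℝ) := {f : X → ℝ | ∃ C, ∀ x, |f x| ≤ C}

/-- A mean on a set `D` of real functions on `X`: positive, normalized, linear on `D`. -/
def IsMeanOn (X : Type*) (D : Set (X → ℝ)) (m : (X → ℝ) → ℝ) : Prop :=
  m (fun _ => 1) = 1 ∧
  (∀ f ∈ D, ∀ g ∈ D, m (f + g) = m f + m g) ∧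
  (∀ (c : ℝ), ∀ f ∈ D, m (c • f) = c * m f) ∧
  (∀ f ∈ D, (∀ x, 0 ≤ f x) → 0 ≤ m f)

lemma bdd_sum {X ι : Type*} (s : Finset ι) (F : ι → X → ℝ)
    (h : ∀ i ∈ s, F i ∈ Bdd X) : (∑ i ∈ s, F i) ∈ Bdd X := by
  classical
  induction s using Finset.induction_on with
  | empty => exact ⟨0, by simp⟩
  | @insert a s hi ih =>
    
    obtain ⟨C, hC⟩ := h a (Finset.mem_insert_self a s)
    obtain ⟨D, hD⟩ := ih (fun i hi => h i (Finset.mem_insert_of_mem hi))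
    refine ⟨C + D, fun x => ?_⟩
    rw [Finset.sum_insert hi]
    calc |(F a + ∑ i ∈ s, F i) x| ≤ |F a x| + |(∑ i ∈ s, F i) x| := abs_add_le _ _
    _ ≤ C + D := add_le_add (hC x) (hD x)
lemma mean_zero {X : Type*} (m : (X → ℝ) → ℝ) (hm : IsMeanOn X (Bdd X) m) :
    m 0 = 0 := by
  have h := hm.2.2.1 0 (fun _ => 1) ⟨1, by simp⟩
  have : (0:ℝ) • (fun _ : X => (1:ℝ)) = (0 : X → ℝ) := by funext x; simp
  rw [this] at h; rw [h]; ring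
lemma mean_sum {X ι : Type*} (m : (X → ℝ) → ℝ) (hm : IsMeanOn X (Bdd X) m)
    (s : Finset ι) (F : ι → X → ℝ) (h : ∀ i ∈ s, F i ∈ Bdd X) :
    m (∑ i ∈ s, F i) = ∑ i ∈ s, m (F i) := by
  classical
  induction s using Finset.induction_on with
  | empty => simpa using mean_zero m hm
  | @insert a s hi ih =>
    
    rw [Finset.sum_insert hi, Finset.sum_insert hi,
      hm.2.1 _ (h a (Finset.mem_insert_self a s)) _
        (bdd_sum s F (fun i hi => h i (Finset.mem_insert_of_mem hi))),
      ih (fun i hi => h i (Finset.mem_insert_of_mem hi))]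

/-- A mean on `ℓ∞(X)` is invariant under a group action `(G, X)` iff it is invariant under
the wobbling group `W(G, X)` of the action. -/
theorem stmt_13 {G X : Type*} [Group G] [MulAction G X] [Nonempty X]
    (m : (X → ℝ) → ℝ) (hm : IsMeanOn X (Bdd X) m) :
    (∀ f ∈ Bdd X, ∀ g : G, m (fun x => f (g • x)) = m f) ↔
      (∀ f ∈ Bdd X, ∀ γ : Equiv.Perm X,
        (∃ E : Finset G, ∀ x : X, ∃ g ∈ E, γ x = g • x) →
        m (fun x => f (γ x)) = m f) := by
  classical
  constructor
  · rintro hinv f hf γ ⟨E, hE⟩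
    obtain ⟨C, hC⟩ := hf
    have hC0 : (0:ℝ) ≤ C := le_trans (abs_nonneg _) (hC (Classical.arbitrary X))
    set c : X → G := fun x => (hE x).choose with hc
    have hcE : ∀ x, c x ∈ E := fun x => (hE x).choose_spec.1
    have hcγ : ∀ x, γ x = c x • x := fun x => (hE x).choose_spec.2
    set F : G → X → ℝ := fun g x => if c x = g then f (γ x) else 0 with hF
    set H : G → X → ℝ := fun g x => if c (g⁻¹ • x) = g then f x else 0 with hH
    have hFB : ∀ g, F g ∈ Bdd X := fun g =>
      ⟨C, fun x => by by_cases h : c x = g <;> simp [hF, h, hC, hC0]⟩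
    have hHB : ∀ g, H g ∈ Bdd X := fun g =>
      ⟨C, fun x => by by_cases h : c (g⁻¹ • x) = g <;> simp [hH, h, hC, hC0]⟩
    have h1 : (fun x => f (γ x)) = ∑ g ∈ E, F g := by
      funext x
      rw [Finset.sum_apply]
      simp only [hF]
      rw [Finset.sum_ite_eq E (c x) (fun _ => f (γ x))]
      simp [hcE x]
    have h2 : ∀ g, (fun x => H g (g • x)) = F g := by
      intro g; funext x
      simp only [hH, hF, inv_smul_smul]
      by_cases h : c x = g
      · rw [if_pos h, if_pos h, hcγ x, h]
      · rw [if_neg h, if_neg h]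
    have h3 : (∑ g ∈ E, H g) = f := by
      funext x
      rw [Finset.sum_apply]
      have hy : γ (γ.symm x) = x := γ.apply_symm_apply x
      set g₀ : G := c (γ.symm x) with hg₀
      have hx : g₀ • (γ.symm x) = x := by rw [← hcγ, hy]
      have hg₀inv : g₀⁻¹ • x = γ.symm x := inv_smul_eq_iff.2 hx.symm
      rw [Finset.sum_eq_single_of_mem g₀ (hcE _)]
      · simp [hH, hg₀inv]
        exact fun h => absurd hg₀.symm h
      · intro g hg hne
        simp only [hH, ite_eq_right_iff]
        intro hcg
        exfalso
        apply hne
        have : γ (g⁻¹ • x) = x := by rw [hcγ, hcg, smul_inv_smul]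
        have hz : g⁻¹ • x = γ.symm x := γ.injective (by rw [this, hy])
        rw [hg₀, ← hz, hcg]
    calc m (fun x => f (γ x)) = m (∑ g ∈ E, F g) := by rw [h1]
      _ = ∑ g ∈ E, m (F g) := mean_sum m hm E F (fun g _ => hFB g)
      _ = ∑ g ∈ E, m (H g) := by
          refine Finset.sum_congr rfl fun g _ => ?_
          rw [← h2 g]; exact hinv (H g) (hHB g) g
      _ = m (∑ g ∈ E, H g) := (mean_sum m hm E H (fun g _ => hHB g)).symm
      _ = m f := by rw [h3]
  · intro h f hf g
    exact h f hf (MulAction.toPerm g)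
      ⟨{g}, fun x => ⟨g, Finset.mem_singleton_self g, rfl⟩⟩
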